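/- Weighted Packing Lemma: Let (X, 𝒫) be a finite set system with n sets and VC-dimension at most d (d ≥ 1 an integer), equipped with a probability weight μ on X, and suppose μ(Δ(Sᵢ,Sⱼ)) ≥ δ for all distinct sets Sᵢ, Sⱼ ∈ 𝒫, where δ ∈ (0,1). Let Y be the set of distinct values in an iid sample of size s = ⌈8d/δ⌉ − 1 drawn from μ with replacement. Then n ≤ 2·E[|𝒫|_Y|], where 𝒫|_Y = {S ∩ Y : S ∈ 𝒫}. -/

import Mathlib

open Finset

set_option maxHeartbeats 1600000

namespace WPL

variable {α : Type*} [DecidableEq α]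

def Shat (Q : Finset (Finset α)) (d : ℕ) : Prop :=
  ∀ T : Finset α, (∀ T' ⊆ T, ∃ A ∈ Q, A ∩ T = T') → T.card ≤ d

def Edg (Q : Finset (Finset α)) : Finset (Finset α × Finset α) :=
  (Q ×ˢ Q).filter fun p => (symmDiff p.1 p.2).card = 1

lemma mem_Edg {Q : Finset (Finset α)} {p : Finset α × Finset α} :
    p ∈ Edg Q ↔ p.1 ∈ Q ∧ p.2 ∈ Q ∧ (symmDiff p.1 p.2).card = 1 := by
  simp [Edg, mem_filter, mem_product, and_assoc]

lemma shat_anti {Q Q' : Finset (Finset α)} {d : ℕ} (h : Q' ⊆ Q) (hs : Shat Q d) :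
    Shat Q' d := fun T hT => hs T (fun T' hT' => by
  obtain ⟨A, hA, hA'⟩ := hT T' hT'; exact ⟨A, h hA, hA'⟩)

lemma eq_insert_of_symmDiff {A B : Finset α} {x : α} (h : symmDiff A B = {x}) (hx : x ∉ A) :
    B = insert x A := by
  have hmem : ∀ y, y ∈ symmDiff A B ↔ y = x := by simp [h]
  ext y
  rcases eq_or_ne y x with rfl | hne
  · have h1 := (hmem y).2 rfl
    rw [Finset.mem_symmDiff] at h1
    simp only [mem_insert, true_or]
    tauto
  · have h2 := hmem y
    rw [Finset.mem_symmDiff] at h2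
    simp only [mem_insert, hne, false_or]
    by_cases hB : y ∈ B <;> by_cases hA2 : y ∈ A <;> tauto

lemma symmDiff_erase_erase {A B : Finset α} {a : α} (hA : a ∈ A) (hB : a ∈ B) :
    symmDiff (A.erase a) (B.erase a) = symmDiff A B := by
  ext y
  rw [Finset.mem_symmDiff, Finset.mem_symmDiff]
  by_cases hy : y = a
  · subst hy; simp [hA, hB]
  · simp [Finset.mem_erase, hy]

lemma shat_edge_zero {Q : Finset (Finset α)} (hs : Shat Q 0) : Edg Q = ∅ := by
  rw [eq_empty_iff_forall_notMem]
  rintro ⟨A, B⟩ hp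
  rw [mem_Edg] at hp
  obtain ⟨hA, hB, hcard⟩ := hp
  obtain ⟨x, hx⟩ := Finset.card_eq_one.1 hcard
  have hx' := hs {x} ?_
  · simp at hx'
  · intro T' hT'
    have hxmem : x ∈ symmDiff A B := by rw [hx]; exact mem_singleton_self x
    rw [Finset.mem_symmDiff] at hxmem
    rcases Finset.subset_singleton_iff.1 hT' with rfl | rfl
    · rcases hxmem with ⟨h1, h2⟩ | ⟨h1, h2⟩
      · exact ⟨B, hB, by ext y; simp; rintro hy rfl; exact h2 hy⟩
      · exact ⟨A, hA, by ext y; simp; rintro hy rfl; exact h2 hy⟩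
    · rcases hxmem with ⟨h1, h2⟩ | ⟨h1, h2⟩
      · exact ⟨A, hA, by ext y; simp; rintro rfl; exact h1⟩
      · exact ⟨B, hB, by ext y; simp; rintro rfl; exact h1⟩


lemma density : ∀ (Y : Finset α), ∀ (d : ℕ) (Q : Finset (Finset α)),
    (∀ A ∈ Q, A ⊆ Y) → Shat Q d → (Edg Q).card ≤ 2 * d * Q.card := by
  intro Y
  induction Y using Finset.induction_on with
  | empty =>
    intro d Q hsub hs
    have hE : Edg Q = ∅ := by
      rw [eq_empty_iff_forall_notMem]
      rintro ⟨A, B⟩ hp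
      rw [mem_Edg] at hp
      have hA : A = ∅ := subset_empty.1 (hsub _ hp.1)
      have hB : B = ∅ := subset_empty.1 (hsub _ hp.2.1)
      have := hp.2.2
      rw [hA, hB] at this
      simp at this
    simp [hE]
  | insert _ _ ha IH =>
    rename_i a Y
    intro d Q hsub hs
    rcases Nat.eq_zero_or_pos d with rfl | hd
    · simp [shat_edge_zero hs]
    obtain ⟨e, rfl⟩ : ∃ e, d = e + 1 := ⟨d - 1, (Nat.succ_pred_eq_of_pos hd).symm⟩
    set Qn := Q.filter (fun A => a ∉ A) with hQndef
    set Qa := Q.filter (fun A => a ∈ A) with hQadef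
    set Qa' := Qa.image (fun A => A.erase a) with hQa'def
    set Q0 := Qn ∪ Qa' with hQ0def
    set Tw := Qn ∩ Qa' with hTwdef
    -- membership characterizations
    have hQn_mem : ∀ {A}, A ∈ Qn ↔ A ∈ Q ∧ a ∉ A := by
      intro A; simp [hQndef, mem_filter]
    have hQa'_mem : ∀ {A}, A ∈ Qa' ↔ a ∉ A ∧ insert a A ∈ Q := by
      intro A
      simp only [hQa'def, mem_image, hQadef, mem_filter]
      constructor
      · rintro ⟨B, ⟨hB, haB⟩, rfl⟩
        exact ⟨notMem_erase _ _, by rwa [insert_erase haB]⟩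
      · rintro ⟨haA, hiA⟩
        exact ⟨insert a A, ⟨hiA, mem_insert_self _ _⟩, by rw [erase_insert haA]⟩
    have hTw_mem : ∀ {A}, A ∈ Tw ↔ A ∈ Q ∧ a ∉ A ∧ insert a A ∈ Q := by
      intro A
      simp only [hTwdef, mem_inter, hQn_mem, hQa'_mem]
      tauto
    -- subsets
    have hsubQ0 : ∀ A ∈ Q0, A ⊆ Y := by
      intro A hA
      rcases mem_union.1 hA with h | h
      · rw [hQn_mem] at h
        intro y hy
        have := hsub A h.1 hy
        rcases mem_insert.1 this with rfl | h2
        · exact absurd hy h.2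
        · exact h2
      · rw [hQa'_mem] at h
        intro y hy
        have : y ∈ insert a A := mem_insert_of_mem hy
        have := hsub _ h.2 this
        rcases mem_insert.1 this with rfl | h2
        · exact absurd hy h.1
        · exact h2
    have hsubTw : ∀ A ∈ Tw, A ⊆ Y := fun A hA =>
      hsubQ0 A (mem_union_left _ (mem_of_mem_inter_left hA))
    -- cardinality
    have hcardQ : Q.card = Q0.card + Tw.card := by
      have h1 : Qn.card + Qa.card = Q.card := by
        have := Finset.card_filter_add_card_filter_not (s := Q) (p := fun A => a ∈ A)
        have hneg : Q.filter (fun A => ¬ a ∈ A) = Qn := rfl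
        have hpos : Q.filter (fun A => a ∈ A) = Qa := rfl
        rw [hneg, hpos] at this
        omega
      have h2 : Qa'.card = Qa.card := by
        rw [hQa'def]
        apply Finset.card_image_of_injOn
        intro A hA B hB hAB
        have haA : a ∈ A := (mem_filter.1 hA).2
        have haB : a ∈ B := (mem_filter.1 hB).2
        have hAB' : A.erase a = B.erase a := hAB
        rw [← insert_erase haA, ← insert_erase haB, hAB']
      have h3 : Q0.card + Tw.card = Qn.card + Qa'.card := by
        rw [hQ0def, hTwdef]
        exact card_union_add_card_inter _ _
      omega
    -- Shat Q0 (e+1)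
    have hshatQ0 : Shat Q0 (e + 1) := by
      intro T hT
      apply hs T
      intro T' hT'
      obtain ⟨A, hA, hAT⟩ := hT T' hT'
      rcases mem_union.1 hA with h | h
      · exact ⟨A, (hQn_mem.1 h).1, hAT⟩
      · rw [hQa'_mem] at h
        refine ⟨insert a A, h.2, ?_⟩
        rw [← hAT]
        -- (insert a A) ∩ T = A ∩ T  since a ∉ T
        have haT : a ∉ T := by
          intro haT
          obtain ⟨B, hB, hBT⟩ := hT T Subset.rfl
          have hTB : T ⊆ B := by rw [← hBT]; exact inter_subset_left
          have hBY : B ⊆ Y := hsubQ0 B hB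
          exact ha (hBY (hTB haT))
        ext y
        simp only [mem_inter, mem_insert]
        constructor
        · rintro ⟨rfl | hy, hyT⟩
          · exact absurd hyT haT
          · exact ⟨hy, hyT⟩
        · rintro ⟨hy, hyT⟩; exact ⟨Or.inr hy, hyT⟩
    -- Shat Tw e
    have hshatTw : Shat Tw e := by
      intro T hT
      rcases T.eq_empty_or_nonempty with rfl | hTne
      · simp
      have hTY : T ⊆ Y := by
        obtain ⟨B, hB, hBT⟩ := hT T Subset.rfl
        have hTB : T ⊆ B := by rw [← hBT]; exact inter_subset_left
        exact hTB.trans (hsubTw B hB)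
      have haT : a ∉ T := fun h => ha (hTY h)
      have hcard : (insert a T).card ≤ e + 1 := by
        apply hs
        intro T' hT'
        by_cases haT' : a ∈ T'
        · have hsub' : T'.erase a ⊆ T := by
            intro y hy
            have hy1 := mem_of_mem_erase hy
            have hy2 := ne_of_mem_erase hy
            rcases mem_insert.1 (hT' hy1) with rfl | h
            · exact absurd rfl hy2
            · exact h
          obtain ⟨A, hA, hAT⟩ := hT _ hsub'
          rw [hTw_mem] at hA
          refine ⟨insert a A, hA.2.2, ?_⟩
          have : (insert a A) ∩ (insert a T) = insert a (A ∩ T) := by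
            ext y
            simp only [mem_inter, mem_insert]
            tauto
          rw [this, hAT, insert_erase haT']
        · have hsub' : T' ⊆ T := by
            intro y hy
            rcases mem_insert.1 (hT' hy) with rfl | h
            · exact absurd hy haT'
            · exact h
          obtain ⟨A, hA, hAT⟩ := hT _ hsub'
          rw [hTw_mem] at hA
          refine ⟨A, hA.1, ?_⟩
          have : A ∩ (insert a T) = A ∩ T := by
            ext y
            simp only [mem_inter, mem_insert]
            constructor
            · rintro ⟨hy, rfl | hyT⟩
              · exact absurd hy hA.2.1
              · exact ⟨hy, hyT⟩
            · rintro ⟨hy, hyT⟩; exact ⟨hy, Or.inr hyT⟩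
          rw [this, hAT]
      rw [card_insert_of_notMem haT] at hcard
      omega
    -- split edges by direction
    set EA := (Edg Q).filter (fun p => symmDiff p.1 p.2 = {a}) with hEAdef
    set EO := (Edg Q).filter (fun p => ¬ (symmDiff p.1 p.2 = {a})) with hEOdef
    have hsplit : EA.card + EO.card = (Edg Q).card := by
      rw [hEAdef, hEOdef]
      exact Finset.card_filter_add_card_filter_not _
    -- structure of direction-a edges
    have hstruct : ∀ p ∈ EA, (a ∈ p.1 ∧ a ∉ p.2 ∧ p.1 = insert a p.2 ∧ p.2 ∈ Tw)
        ∨ (a ∉ p.1 ∧ a ∈ p.2 ∧ p.2 = insert a p.1 ∧ p.1 ∈ Tw) := by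
      intro p hp
      rw [hEAdef, mem_filter, mem_Edg] at hp
      obtain ⟨⟨h1, h2, _⟩, hda⟩ := hp
      have hamem : a ∈ symmDiff p.1 p.2 := by rw [hda]; exact mem_singleton_self a
      rw [Finset.mem_symmDiff] at hamem
      rcases hamem with ⟨ha1, ha2⟩ | ⟨ha2, ha1⟩
      · left
        have heq : p.1 = insert a p.2 :=
          eq_insert_of_symmDiff (by rwa [symmDiff_comm]) ha2
        exact ⟨ha1, ha2, heq, hTw_mem.2 ⟨h2, ha2, by rwa [← heq]⟩⟩
      · right
        have heq : p.2 = insert a p.1 := eq_insert_of_symmDiff hda ha1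
        exact ⟨ha1, ha2, heq, hTw_mem.2 ⟨h1, ha1, by rwa [← heq]⟩⟩
    have hEAcard : EA.card ≤ 2 * Tw.card := by
      have h2c : ((univ : Finset Bool) ×ˢ Tw).card = 2 * Tw.card := by
        rw [card_product]; simp
      rw [← h2c]
      apply Finset.card_le_card_of_injOn
        (fun p => (decide (a ∈ p.1), if a ∈ p.1 then p.2 else p.1))
      · intro p hp
        rcases hstruct p hp with ⟨ha1, _, _, hmem⟩ | ⟨ha1, _, _, hmem⟩
        · simp only [mem_coe, mem_product, mem_univ, true_and, ha1, if_true]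
          exact hmem
        · simp only [mem_coe, mem_product, mem_univ, true_and, ha1, if_false]
          exact hmem
      · intro p hp q hq hpq
        have hfst := congrArg Prod.fst hpq
        have hsnd := congrArg Prod.snd hpq
        simp only [decide_eq_decide] at hfst
        rcases hstruct p hp with ⟨hp1, _, hpe, _⟩ | ⟨hp1, _, hpe, _⟩ <;>
          rcases hstruct q hq with ⟨hq1, _, hqe, _⟩ | ⟨hq1, _, hqe, _⟩
        · simp only [hp1, hq1, if_true] at hsnd
          exact Prod.ext (by rw [hpe, hqe, hsnd]) hsnd
        · exact absurd (hfst.1 hp1) hq1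
        · exact absurd (hfst.2 hq1) hp1
        · simp only [hp1, hq1, if_false] at hsnd
          exact Prod.ext hsnd (by rw [hpe, hqe, hsnd])
    -- off-direction edges
    have hEOfacts : ∀ p ∈ EO, p ∈ Edg Q ∧ (a ∈ p.1 ↔ a ∈ p.2) := by
      intro p hp
      rw [hEOdef, mem_filter] at hp
      obtain ⟨hpE, hne⟩ := hp
      refine ⟨hpE, ?_⟩
      have hcard1 := (mem_Edg.1 hpE).2.2
      obtain ⟨x, hx⟩ := Finset.card_eq_one.1 hcard1
      have hxa : x ≠ a := by rintro rfl; exact hne hx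
      have hanot : a ∉ symmDiff p.1 p.2 := by
        rw [hx]; simp [Ne.symm hxa]
      rw [Finset.mem_symmDiff] at hanot
      push_neg at hanot
      exact ⟨fun h => hanot.1 h, fun h => hanot.2 h⟩
    have hEOcard : EO.card ≤ (Edg Q0).card + (Edg Tw).card := by
      rw [← Finset.card_disjSum]
      apply Finset.card_le_card_of_injOn
        (fun p => if a ∈ p.1 then Sum.inl (p.1.erase a, p.2.erase a)
          else (if p ∈ Edg Tw then Sum.inr p else Sum.inl p))
      · intro p hp
        obtain ⟨hpE, hiff⟩ := hEOfacts p hp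
        rw [mem_Edg] at hpE
        obtain ⟨h1, h2, h3⟩ := hpE
        by_cases hap : a ∈ p.1
        · have hap2 : a ∈ p.2 := hiff.1 hap
          simp only [hap, if_true]
          apply Finset.inl_mem_disjSum.2
          rw [mem_Edg]
          refine ⟨?_, ?_, ?_⟩
          · exact mem_union_right _ (hQa'_mem.2 ⟨notMem_erase _ _, by rwa [insert_erase hap]⟩)
          · exact mem_union_right _ (hQa'_mem.2 ⟨notMem_erase _ _, by rwa [insert_erase hap2]⟩)
          · rw [symmDiff_erase_erase hap hap2]; exact h3
        · have hap2 : a ∉ p.2 := fun h => hap (hiff.2 h)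
          simp only [hap, if_false]
          by_cases hTwE : p ∈ Edg Tw
          · simp only [hTwE, if_true]
            exact Finset.inr_mem_disjSum.2 hTwE
          · simp only [hTwE, if_false]
            apply Finset.inl_mem_disjSum.2
            rw [mem_Edg]
            exact ⟨mem_union_left _ (hQn_mem.2 ⟨h1, hap⟩),
              mem_union_left _ (hQn_mem.2 ⟨h2, hap2⟩), h3⟩
      · intro p hp q hq hpq
        obtain ⟨hpE, hpiff⟩ := hEOfacts p hp
        obtain ⟨hqE, hqiff⟩ := hEOfacts q hq
        rw [mem_Edg] at hpE hqE
        -- helper: a-in edge with erased pair in Q implies erased pair in Edg Tw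
        have key : ∀ r : Finset α × Finset α, r.1 ∈ Q → r.2 ∈ Q → a ∈ r.1 → a ∈ r.2 →
            (symmDiff r.1 r.2).card = 1 → (r.1.erase a, r.2.erase a) ∈ Edg Q →
            (r.1.erase a, r.2.erase a) ∈ Edg Tw := by
          rintro r hr1 hr2 har1 har2 hrc hmem
          rw [mem_Edg] at hmem ⊢
          obtain ⟨hm1, hm2, hm3⟩ := hmem
          exact ⟨hTw_mem.2 ⟨hm1, notMem_erase _ _, by rwa [insert_erase har1]⟩,
            hTw_mem.2 ⟨hm2, notMem_erase _ _, by rwa [insert_erase har2]⟩, hm3⟩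
        by_cases hap : a ∈ p.1 <;> by_cases haq : a ∈ q.1
        · simp only [hap, haq, if_true] at hpq
          have := Sum.inl.inj hpq
          have e1 := congrArg Prod.fst this
          have e2 := congrArg Prod.snd this
          simp only at e1 e2
          have hap2 : a ∈ p.2 := hpiff.1 hap
          have haq2 : a ∈ q.2 := hqiff.1 haq
          apply Prod.ext
          · rw [← insert_erase hap, ← insert_erase haq, e1]
          · rw [← insert_erase hap2, ← insert_erase haq2, e2]
        · -- a ∈ p.1, a ∉ q.1 : contradiction
          exfalso
          have hap2 : a ∈ p.2 := hpiff.1 hap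
          have haq2 : a ∉ q.2 := fun h => haq (hqiff.2 h)
          simp only [hap, haq, if_true, if_false] at hpq
          by_cases hTwE : q ∈ Edg Tw
          · simp only [hTwE, if_true] at hpq
            exact Sum.inl_ne_inr hpq
          · simp only [hTwE, if_false] at hpq
            have hq' := Sum.inl.inj hpq
            apply hTwE
            have : q = (p.1.erase a, p.2.erase a) := hq'.symm
            rw [this]
            apply key p hpE.1 hpE.2.1 hap hap2 hpE.2.2
            rw [← this]
            exact mem_Edg.2 hqE
        · -- a ∉ p.1, a ∈ q.1 : symmetric
          exfalso
          have haq2 : a ∈ q.2 := hqiff.1 haq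
          have hap2 : a ∉ p.2 := fun h => hap (hpiff.2 h)
          simp only [hap, haq, if_true, if_false] at hpq
          by_cases hTwE : p ∈ Edg Tw
          · simp only [hTwE, if_true] at hpq
            exact Sum.inr_ne_inl hpq
          · simp only [hTwE, if_false] at hpq
            have hp' := Sum.inl.inj hpq
            apply hTwE
            have : p = (q.1.erase a, q.2.erase a) := hp'
            rw [this]
            apply key q hqE.1 hqE.2.1 haq haq2 hqE.2.2
            rw [← this]
            exact mem_Edg.2 hpE
        · simp only [hap, haq, if_false] at hpq
          by_cases hTp : p ∈ Edg Tw <;> by_cases hTq : q ∈ Edg Tw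
          · simp only [hTp, hTq, if_true] at hpq
            exact Sum.inr.inj hpq
          · simp only [hTp, hTq, if_true, if_false] at hpq
            exact absurd hpq Sum.inr_ne_inl
          · simp only [hTp, hTq, if_true, if_false] at hpq
            exact absurd hpq Sum.inl_ne_inr
          · simp only [hTp, hTq, if_false] at hpq
            exact Sum.inl.inj hpq
    have hQ0card := IH (e+1) Q0 hsubQ0 hshatQ0
    have hTwE2 := IH e Tw hsubTw hshatTw
    have hfinal : (Edg Q).card ≤ 2 * Tw.card + (2 * (e+1) * Q0.card + 2 * e * Tw.card) := by
      omega
    have harith : 2 * Tw.card + (2 * (e+1) * Q0.card + 2 * e * Tw.card)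
        = 2 * (e+1) * (Q0.card + Tw.card) := by ring
    rw [harith, ← hcardQ] at hfinal
    exact hfinal

lemma sum_ite_lt (N m : ℕ) (h : m ≤ N) :
    (∑ t ∈ range N, if t < m then 1 else 0) = m := by
  rw [← Finset.card_filter]
  have : (range N).filter (fun t => t < m) = range m := by
    ext t; simp only [mem_filter, mem_range]; omega
  rw [this, card_range]

lemma Edg_filter (Q : Finset (Finset α)) (P : Finset α → Prop) [DecidablePred P] :
    Edg (Q.filter P) = (Edg Q).filter (fun p => P p.1 ∧ P p.2) := by
  ext p
  simp only [Edg, mem_filter, mem_product]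
  tauto

lemma wdensity (Y : Finset α) (d : ℕ) (Q : Finset (Finset α)) (hsub : ∀ A ∈ Q, A ⊆ Y)
    (hs : Shat Q d) (w : Finset α → ℕ) (N : ℕ) (hw : ∀ A ∈ Q, w A ≤ N) :
    ∑ p ∈ Edg Q, min (w p.1) (w p.2) ≤ 2 * d * ∑ A ∈ Q, w A := by
  have hmin : ∀ p ∈ Edg Q,
      min (w p.1) (w p.2) = ∑ t ∈ range N, if t < w p.1 ∧ t < w p.2 then 1 else 0 := by
    intro p hp
    have hle : min (w p.1) (w p.2) ≤ N :=
      le_trans (min_le_left _ _) (hw _ (mem_Edg.1 hp).1)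
    calc min (w p.1) (w p.2)
        = ∑ t ∈ range N, if t < min (w p.1) (w p.2) then 1 else 0 :=
          (sum_ite_lt N _ hle).symm
      _ = ∑ t ∈ range N, if t < w p.1 ∧ t < w p.2 then 1 else 0 := by
          apply Finset.sum_congr rfl
          intro t _
          congr 1
          simp only [eq_iff_iff, lt_min_iff]
  rw [Finset.sum_congr rfl hmin, Finset.sum_comm]
  have hstep : ∀ t, (∑ p ∈ Edg Q, if t < w p.1 ∧ t < w p.2 then 1 else 0)
      ≤ 2 * d * (Q.filter (fun A => t < w A)).card := by
    intro t
    rw [← Finset.card_filter]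
    have heq : (Edg Q).filter (fun p => t < w p.1 ∧ t < w p.2)
        = Edg (Q.filter (fun A => t < w A)) := (Edg_filter Q (fun A => t < w A)).symm
    rw [heq]
    exact density Y d _ (fun A hA => hsub A (mem_of_mem_filter A hA))
      (shat_anti (filter_subset _ _) hs)
  calc ∑ t ∈ range N, ∑ p ∈ Edg Q, (if t < w p.1 ∧ t < w p.2 then 1 else 0)
      ≤ ∑ t ∈ range N, 2 * d * (Q.filter (fun A => t < w A)).card :=
        Finset.sum_le_sum (fun t _ => hstep t)
    _ = 2 * d * ∑ t ∈ range N, (Q.filter (fun A => t < w A)).card := by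
        rw [Finset.mul_sum]
    _ = 2 * d * ∑ A ∈ Q, w A := by
        congr 1
        have : ∀ t ∈ range N, (Q.filter (fun A => t < w A)).card
            = ∑ A ∈ Q, if t < w A then 1 else 0 := by
          intro t _
          exact Finset.card_filter _ _
        rw [Finset.sum_congr rfl this, Finset.sum_comm]
        apply Finset.sum_congr rfl
        intro A hA
        exact sum_ite_lt N (w A) (hw A hA)


def Mm (Fam : Finset (Finset α)) (Y : Finset α) (x : α) : ℕ :=
  ∑ A ∈ Fam.image (fun S => S ∩ Y),
    min ((Fam.filter fun S => S ∩ Y = A ∧ x ∈ S).card)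
        ((Fam.filter fun S => S ∩ Y = A ∧ x ∉ S).card)

lemma Mm_eq_zero {Fam : Finset (Finset α)} {Y : Finset α} {x : α} (h : x ∈ Y) :
    Mm Fam Y x = 0 := by
  apply Finset.sum_eq_zero
  intro A hA
  by_cases hxA : x ∈ A
  · have he : (Fam.filter fun S => S ∩ Y = A ∧ x ∉ S) = ∅ := by
      rw [filter_eq_empty_iff]
      intro S _ hp
      obtain ⟨hSA, hxS⟩ := hp
      exact hxS (mem_of_mem_inter_left (hSA ▸ hxA : x ∈ S ∩ Y))
    simp [he]
  · have he : (Fam.filter fun S => S ∩ Y = A ∧ x ∈ S) = ∅ := by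
      rw [filter_eq_empty_iff]
      intro S _ hp
      obtain ⟨hSA, hxS⟩ := hp
      exact hxA (hSA ▸ mem_inter.2 ⟨hxS, h⟩)
    simp [he]

lemma symmDiff_insert_self {x : α} {A : Finset α} (hxA : x ∉ A) :
    symmDiff (insert x A) A = {x} := by
  ext y
  rw [Finset.mem_symmDiff]
  simp only [mem_insert, mem_singleton]
  constructor
  · rintro (⟨rfl | hy, hy2⟩ | ⟨hy, hy2⟩)
    · rfl
    · exact absurd hy hy2
    · exact absurd (Or.inr hy) hy2
  · rintro rfl
    exact Or.inl ⟨Or.inl rfl, hxA⟩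

lemma shat_of_hVC {Fam : Finset (Finset α)} {d : ℕ}
    (hVC : ∀ S : Finset α, (∀ T ⊆ S, ∃ R ∈ Fam, R ∩ S = T) → S.card ≤ d)
    (Y : Finset α) : Shat (Fam.image (fun S => S ∩ Y)) d := by
  intro T hT
  obtain ⟨A0, hA0, hA0T⟩ := hT T Subset.rfl
  have hTA0 : T ⊆ A0 := Finset.inter_eq_right.1 hA0T
  have hTY : T ⊆ Y := by
    obtain ⟨S, _, rfl⟩ := mem_image.1 hA0
    exact hTA0.trans inter_subset_right
  apply hVC T
  intro T' hT'
  obtain ⟨A, hA, hAT⟩ := hT T' hT'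
  obtain ⟨S, hS, rfl⟩ := mem_image.1 hA
  refine ⟨S, hS, ?_⟩
  have hYT : Y ∩ T = T := Finset.inter_eq_right.2 hTY
  rw [← hAT, inter_assoc, hYT]

lemma L2core {Fam : Finset (Finset α)} {d : ℕ}
    (hVC : ∀ S : Finset α, (∀ T ⊆ S, ∃ R ∈ Fam, R ∩ S = T) → S.card ≤ d)
    (Y : Finset α) :
    ∑ x ∈ Y, Mm Fam (Y.erase x) x ≤ 2 * d * Fam.card := by
  classical
  set Q := Fam.image (fun S => S ∩ Y) with hQdef
  set w : Finset α → ℕ := fun B => (Fam.filter fun S => S ∩ Y = B).card with hwdef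
  have hQsub : ∀ A ∈ Q, A ⊆ Y := by
    intro A hA
    obtain ⟨S, _, rfl⟩ := mem_image.1 hA
    exact inter_subset_right
  have hwmem : ∀ B, 0 < w B → B ∈ Q := by
    intro B hB
    obtain ⟨S, hS⟩ := Finset.card_pos.1 hB
    rw [mem_filter] at hS
    exact mem_image.2 ⟨S, hS.1, hS.2⟩
  -- rewrite each term
  have hx_eq : ∀ x ∈ Y, Mm Fam (Y.erase x) x
      = ∑ A ∈ Fam.image (fun S => S ∩ (Y.erase x)), min (w (insert x A)) (w A) := by
    intro x hx
    apply Finset.sum_congr rfl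
    intro A hA
    have hAsub : A ⊆ Y.erase x := by
      obtain ⟨S, _, rfl⟩ := mem_image.1 hA
      exact inter_subset_right
    have hxA : x ∉ A := fun h => (mem_erase.1 (hAsub h)).1 rfl
    have e1 : (Fam.filter fun S => S ∩ (Y.erase x) = A ∧ x ∈ S)
        = Fam.filter (fun S => S ∩ Y = insert x A) := by
      apply filter_congr
      intro S _
      constructor
      · rintro ⟨hSA, hxS⟩
        ext y
        simp only [mem_inter, mem_insert]
        by_cases hy : y = x
        · subst hy; simp [hxS, hx]
        · constructor
          · rintro ⟨h1, h2⟩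
            right
            rw [← hSA]
            exact mem_inter.2 ⟨h1, mem_erase.2 ⟨hy, h2⟩⟩
          · rintro (rfl | h)
            · exact absurd rfl hy
            · have := hSA ▸ h
              rw [mem_inter, mem_erase] at this
              exact ⟨this.1, this.2.2⟩
      · intro hSY
        have hxS : x ∈ S := by
          have : x ∈ S ∩ Y := hSY ▸ mem_insert_self x A
          exact mem_of_mem_inter_left this
        refine ⟨?_, hxS⟩
        ext y
        simp only [mem_inter, mem_erase]
        constructor
        · rintro ⟨h1, hy, h2⟩
          have : y ∈ insert x A := hSY ▸ mem_inter.2 ⟨h1, h2⟩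
          rcases mem_insert.1 this with rfl | h
          · exact absurd rfl hy
          · exact h
        · intro hyA
          have hy : y ∈ insert x A := mem_insert_of_mem hyA
          rw [← hSY, mem_inter] at hy
          have hyx : y ≠ x := fun h => hxA (h ▸ hyA)
          exact ⟨hy.1, hyx, hy.2⟩
    have e0 : (Fam.filter fun S => S ∩ (Y.erase x) = A ∧ x ∉ S)
        = Fam.filter (fun S => S ∩ Y = A) := by
      apply filter_congr
      intro S _
      constructor
      · rintro ⟨hSA, hxS⟩
        rw [← hSA]
        ext y
        simp only [mem_inter, mem_erase]
        constructor
        · rintro ⟨h1, h2⟩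
          have : y ≠ x := fun h => hxS (h ▸ h1)
          exact ⟨h1, this, h2⟩
        · rintro ⟨h1, _, h2⟩
          exact ⟨h1, h2⟩
      · intro hSY
        have hxS : x ∉ S := by
          intro h
          have : x ∈ A := hSY ▸ mem_inter.2 ⟨h, hx⟩
          exact hxA this
        refine ⟨?_, hxS⟩
        rw [← hSY]
        ext y
        simp only [mem_inter, mem_erase]
        constructor
        · rintro ⟨h1, _, h2⟩
          exact ⟨h1, h2⟩
        · rintro ⟨h1, h2⟩
          exact ⟨h1, fun h => hxS (h ▸ h1), h2⟩
    rw [e1, e0]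
  rw [Finset.sum_congr rfl hx_eq]
  set σs := Y.sigma (fun x => Fam.image (fun S => S ∩ (Y.erase x))) with hσdef
  set D := σs.filter (fun q => min (w (insert q.1 q.2)) (w q.2) ≠ 0) with hDdef
  have hDfacts : ∀ q ∈ D, q.1 ∈ Y ∧ q.2 ⊆ Y.erase q.1 ∧ q.1 ∉ q.2 ∧
      0 < w (insert q.1 q.2) ∧ 0 < w q.2 := by
    intro q hq
    rw [hDdef, mem_filter, hσdef, mem_sigma] at hq
    obtain ⟨⟨hq1, hq2⟩, hne⟩ := hq
    have hsub : q.2 ⊆ Y.erase q.1 := by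
      obtain ⟨S, _, h⟩ := mem_image.1 hq2
      rw [← h]
      exact inter_subset_right
    have hnot : q.1 ∉ q.2 := fun h => (mem_erase.1 (hsub h)).1 rfl
    have hpos1 : 0 < w (insert q.1 q.2) :=
      Nat.pos_of_ne_zero (fun h => hne (by rw [h]; simp))
    have hpos2 : 0 < w q.2 :=
      Nat.pos_of_ne_zero (fun h => hne (by rw [h]; simp))
    exact ⟨hq1, hsub, hnot, hpos1, hpos2⟩
  have hinj : Set.InjOn (fun q : (_ : α) × Finset α => (insert q.1 q.2, q.2)) D := by
    intro q1 hq1 q2 hq2 heq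
    obtain ⟨_, _, hn1, _, _⟩ := hDfacts q1 hq1
    obtain ⟨_, _, hn2, _, _⟩ := hDfacts q2 hq2
    have e2 : q1.2 = q2.2 := congrArg Prod.snd heq
    have e1 : insert q1.1 q1.2 = insert q2.1 q2.2 := congrArg Prod.fst heq
    have : q1.1 = q2.1 := by
      have h1 : q1.1 ∈ insert q2.1 q2.2 := e1 ▸ mem_insert_self _ _
      rcases mem_insert.1 h1 with h | h
      · exact h
      · rw [← e2] at h; exact absurd h hn1
    exact Sigma.ext this (by rw [e2])
  have himg : D.image (fun q : (_ : α) × Finset α => (insert q.1 q.2, q.2)) ⊆ Edg Q := by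
    intro p hp
    obtain ⟨q, hq, rfl⟩ := mem_image.1 hp
    obtain ⟨hq1, _, hnot, hw1, hw2⟩ := hDfacts q hq
    rw [mem_Edg]
    refine ⟨hwmem _ hw1, hwmem _ hw2, ?_⟩
    rw [symmDiff_insert_self hnot]
    exact card_singleton _
  calc ∑ x ∈ Y, ∑ A ∈ Fam.image (fun S => S ∩ (Y.erase x)), min (w (insert x A)) (w A)
      = ∑ q ∈ σs, min (w (insert q.1 q.2)) (w q.2) :=
        (Finset.sum_sigma Y (fun x => Fam.image (fun S => S ∩ (Y.erase x)))
          (fun q => min (w (insert q.1 q.2)) (w q.2))).symm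
    _ = ∑ q ∈ D, min (w (insert q.1 q.2)) (w q.2) :=
        (Finset.sum_filter_ne_zero σs).symm
    _ = ∑ p ∈ D.image (fun q : (_ : α) × Finset α => (insert q.1 q.2, q.2)),
        min (w p.1) (w p.2) :=
        (Finset.sum_image (f := fun p : Finset α × Finset α => min (w p.1) (w p.2))
          (fun q hq q' hq' h => hinj hq hq' h)).symm
    _ ≤ ∑ p ∈ Edg Q, min (w p.1) (w p.2) := Finset.sum_le_sum_of_subset himg
    _ ≤ 2 * d * ∑ A ∈ Q, w A := wdensity Y d Q hQsub (shat_of_hVC hVC Y) w Fam.card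
        (fun A _ => Finset.card_filter_le _ _)
    _ = 2 * d * Fam.card := by rw [← Finset.card_eq_sum_card_image]

lemma L2 {Fam : Finset (Finset α)} {d : ℕ}
    (hVC : ∀ S : Finset α, (∀ T ⊆ S, ∃ R ∈ Fam, R ∩ S = T) → S.card ≤ d)
    (m : ℕ) [Fintype α] (z : Fin m → α) :
    ∑ i : Fin m, Mm Fam (((univ : Finset (Fin m)).erase i).image z) (z i)
      ≤ 2 * d * Fam.card := by
  classical
  rw [← Finset.sum_filter_add_sum_filter_not univ (fun i => ∀ j, j ≠ i → z j ≠ z i)]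
  have hzero : ∑ i ∈ univ.filter (fun i => ¬ ∀ j, j ≠ i → z j ≠ z i),
      Mm Fam (((univ : Finset (Fin m)).erase i).image z) (z i) = 0 := by
    apply Finset.sum_eq_zero
    intro i hi
    rw [mem_filter] at hi
    push_neg at hi
    obtain ⟨j, hji, hzj⟩ := hi.2
    apply Mm_eq_zero
    exact mem_image.2 ⟨j, by simp [hji], hzj⟩
  rw [hzero, add_zero]
  set I := univ.filter (fun i : Fin m => ∀ j, j ≠ i → z j ≠ z i) with hIdef
  have himg_eq : ∀ i ∈ I, ((univ : Finset (Fin m)).erase i).image z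
      = ((univ : Finset (Fin m)).image z).erase (z i) := by
    intro i hi
    rw [hIdef, mem_filter] at hi
    ext y
    simp only [mem_image, mem_erase, mem_univ, true_and, and_true]
    constructor
    · rintro ⟨j, hji, rfl⟩
      exact ⟨hi.2 j hji, ⟨j, rfl⟩⟩
    · rintro ⟨hy, j, rfl⟩
      exact ⟨j, fun h => hy (h ▸ rfl), rfl⟩
  rw [Finset.sum_congr rfl (fun i hi => by rw [himg_eq i hi])]
  have hinj : ∀ i ∈ I, ∀ j ∈ I, z i = z j → i = j := by
    intro i hi j hj hij
    by_contra hne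
    rw [hIdef, mem_filter] at hi
    exact hi.2 j (fun h => hne h.symm) hij.symm
  have hsum := Finset.sum_image (s := I) (g := z)
    (f := fun x => Mm Fam (((univ : Finset (Fin m)).image z).erase x) x) hinj
  rw [← hsum]
  calc ∑ x ∈ I.image z, Mm Fam (((univ : Finset (Fin m)).image z).erase x) x
      ≤ ∑ x ∈ (univ : Finset (Fin m)).image z,
          Mm Fam (((univ : Finset (Fin m)).image z).erase x) x := by
        apply Finset.sum_le_sum_of_subset
        intro x hx
        obtain ⟨i, _, rfl⟩ := mem_image.1 hx
        exact mem_image.2 ⟨i, mem_univ _, rfl⟩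
    _ ≤ 2 * d * Fam.card := L2core hVC _


lemma stepA {Fam : Finset (Finset α)} [Fintype α] {μ : α → ℝ} (hμ0 : ∀ x, 0 ≤ μ x)
    {δ : ℝ}
    (hsep : ∀ S ∈ Fam, ∀ R ∈ Fam, S ≠ R → δ ≤ ∑ x ∈ (S \ R) ∪ (R \ S), μ x)
    (Y : Finset α) :
    δ * ((Fam.card : ℝ) - ((Fam.image (fun S => S ∩ Y)).card : ℝ))
      ≤ 2 * ∑ x : α, μ x * (Mm Fam Y x : ℝ) := by
  classical
  set Q := Fam.image (fun S => S ∩ Y) with hQdef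
  -- the right side as a sum over classes
  have hM : ∀ x, (Mm Fam Y x : ℝ) = ∑ A ∈ Q,
      (min ((Fam.filter fun S => S ∩ Y = A ∧ x ∈ S).card)
        ((Fam.filter fun S => S ∩ Y = A ∧ x ∉ S).card) : ℝ) := by
    intro x
    rw [Mm]
    push_cast
    rfl
  have hRHS : ∑ x : α, μ x * (Mm Fam Y x : ℝ)
      = ∑ A ∈ Q, ∑ x : α, μ x *
        (min ((Fam.filter fun S => S ∩ Y = A ∧ x ∈ S).card)
          ((Fam.filter fun S => S ∩ Y = A ∧ x ∉ S).card) : ℝ) := by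
    rw [Finset.sum_comm]
    apply Finset.sum_congr rfl
    intro x _
    rw [hM x, Finset.mul_sum]
  -- per class inequality
  have hperA : ∀ A ∈ Q, δ * (((Fam.filter fun S => S ∩ Y = A).card : ℝ) - 1)
      ≤ 2 * ∑ x : α, μ x *
        (min ((Fam.filter fun S => S ∩ Y = A ∧ x ∈ S).card)
          ((Fam.filter fun S => S ∩ Y = A ∧ x ∉ S).card) : ℝ) := by
    intro A hA
    set c := Fam.filter (fun S => S ∩ Y = A) with hcdef
    set k := c.card with hkdef
    have hk1 : 1 ≤ k := by
      obtain ⟨S, hS, hSA⟩ := mem_image.1 hA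
      exact Finset.card_pos.2 ⟨S, mem_filter.2 ⟨hS, hSA⟩⟩
    set a : α → ℕ := fun x => (c.filter (fun S => x ∈ S)).card with hadef
    set b : α → ℕ := fun x => (c.filter (fun S => x ∉ S)).card with hbdef
    have hfe1 : ∀ x, (Fam.filter fun S => S ∩ Y = A ∧ x ∈ S) = c.filter (fun S => x ∈ S) := by
      intro x; rw [hcdef, filter_filter]
    have hfe0 : ∀ x, (Fam.filter fun S => S ∩ Y = A ∧ x ∉ S) = c.filter (fun S => x ∉ S) := by
      intro x; rw [hcdef, filter_filter]
    have habk : ∀ x, a x + b x = k :=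
      fun x => Finset.card_filter_add_card_filter_not (p := fun S => x ∈ S)
    -- product count
    have hcount : ∀ x, ((c ×ˢ c).filter (fun p => x ∈ p.1 ∧ x ∉ p.2)).card = a x * b x := by
      intro x
      rw [Finset.filter_product (fun S => x ∈ S) (fun S => x ∉ S), card_product]
    -- sum over pairs
    have hsum_ab : ∑ x : α, μ x * ((a x * b x : ℕ) : ℝ)
        = ∑ p ∈ c ×ˢ c, ∑ x ∈ p.1 \ p.2, μ x := by
      have h1 : ∀ x : α, μ x * ((a x * b x : ℕ) : ℝ)
          = ∑ p ∈ c ×ˢ c, if x ∈ p.1 ∧ x ∉ p.2 then μ x else 0 := by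
        intro x
        rw [Finset.sum_ite, Finset.sum_const_zero, add_zero, Finset.sum_const, ← hcount x]
        rw [nsmul_eq_mul, mul_comm]
      rw [Finset.sum_congr rfl (fun x _ => h1 x), Finset.sum_comm]
      apply Finset.sum_congr rfl
      intro p _
      rw [← Finset.sum_filter]
      congr 1
      ext x
      simp [mem_sdiff]
    -- symmetrize
    have hswap : ∑ p ∈ c ×ˢ c, ∑ x ∈ p.1 \ p.2, μ x
        = ∑ p ∈ c ×ˢ c, ∑ x ∈ p.2 \ p.1, μ x := by
      rw [Finset.sum_product, Finset.sum_product]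
      exact Finset.sum_comm (s := c) (t := c) (f := fun S R => ∑ x ∈ S \ R, μ x)
    have hpair : δ * ((k : ℝ) * ((k : ℝ) - 1)) ≤ 2 * ∑ p ∈ c ×ˢ c, ∑ x ∈ p.1 \ p.2, μ x := by
      have htwo : 2 * ∑ p ∈ c ×ˢ c, ∑ x ∈ p.1 \ p.2, μ x
          = ∑ p ∈ c ×ˢ c, (∑ x ∈ p.1 \ p.2, μ x + ∑ x ∈ p.2 \ p.1, μ x) := by
        rw [Finset.sum_add_distrib, ← hswap]; ring
      rw [htwo]
      have hlb : ∀ p ∈ c ×ˢ c, (if p.1 ≠ p.2 then δ else 0)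
          ≤ ∑ x ∈ p.1 \ p.2, μ x + ∑ x ∈ p.2 \ p.1, μ x := by
        intro p hp
        rw [mem_product] at hp
        have hp1 : p.1 ∈ Fam := mem_of_mem_filter _ hp.1
        have hp2 : p.2 ∈ Fam := mem_of_mem_filter _ hp.2
        by_cases hne : p.1 = p.2
        · simp only [hne, ne_eq, not_true_eq_false, if_false]
          apply add_nonneg <;> exact Finset.sum_nonneg (fun x _ => hμ0 x)
        · simp only [ne_eq, hne, not_false_eq_true, if_true]
          rw [← Finset.sum_union disjoint_sdiff_sdiff]
          exact hsep _ hp1 _ hp2 hne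
      have hge := Finset.sum_le_sum hlb
      have hcnt : ∑ p ∈ c ×ˢ c, (if p.1 ≠ p.2 then δ else 0)
          = δ * ((k : ℝ) * (k : ℝ) - (k : ℝ)) := by
        rw [Finset.sum_ite, Finset.sum_const_zero, add_zero, Finset.sum_const]
        have hdiag : ((c ×ˢ c).filter (fun p => ¬ p.1 ≠ p.2)).card = k := by
          have heq : (c ×ˢ c).filter (fun p : Finset α × Finset α => ¬ p.1 ≠ p.2)
              = c.image (fun S => (S, S)) := by
            ext p
            simp only [mem_filter, mem_product, mem_image, ne_eq, not_not]
            constructor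
            · rintro ⟨⟨h1, _⟩, h3⟩
              exact ⟨p.1, h1, Prod.ext rfl h3⟩
            · rintro ⟨S, hS, rfl⟩
              exact ⟨⟨hS, hS⟩, rfl⟩
          rw [heq, Finset.card_image_of_injective _ (fun S R h => (Prod.ext_iff.1 h).1)]
        have htot := Finset.card_filter_add_card_filter_not
          (s := c ×ˢ c) (p := fun p => p.1 ≠ p.2)
        rw [hdiag, card_product] at htot
        have hfne : (((c ×ˢ c).filter (fun p => p.1 ≠ p.2)).card : ℝ)
            = (k : ℝ) * (k : ℝ) - (k : ℝ) := by
          have hkk : c.card * c.card = k * k := by rw [← hkdef]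
          have hthis : ((c ×ˢ c).filter (fun p => p.1 ≠ p.2)).card = k * k - k := by omega
          have hle : k ≤ k * k := Nat.le_mul_of_pos_left k (by omega)
          rw [hthis, Nat.cast_sub hle]
          push_cast
          ring
        rw [nsmul_eq_mul, hfne]
        ring
      calc δ * ((k : ℝ) * ((k : ℝ) - 1)) = δ * ((k : ℝ) * (k : ℝ) - (k : ℝ)) := by ring
        _ = ∑ p ∈ c ×ˢ c, (if p.1 ≠ p.2 then δ else 0) := hcnt.symm
        _ ≤ _ := hge
    -- min bound
    have hmin : ∀ x : α, ((a x * b x : ℕ) : ℝ) ≤ (k : ℝ) * ((min (a x) (b x) : ℕ) : ℝ) := by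
      intro x
      have hnat : a x * b x ≤ k * min (a x) (b x) := by
        rcases le_total (a x) (b x) with h | h
        · rw [min_eq_left h]
          calc a x * b x = b x * a x := mul_comm _ _
          _ ≤ k * a x := Nat.mul_le_mul_right _ (by have := habk x; omega)
        · rw [min_eq_right h]
          exact Nat.mul_le_mul_right _ (by have := habk x; omega)
      calc ((a x * b x : ℕ) : ℝ) ≤ ((k * min (a x) (b x) : ℕ) : ℝ) := Nat.cast_le.2 hnat
        _ = (k : ℝ) * ((min (a x) (b x) : ℕ) : ℝ) := by push_cast; ring
    have hsum_min : ∑ x : α, μ x * ((a x * b x : ℕ) : ℝ)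
        ≤ (k : ℝ) * ∑ x : α, μ x * ((min (a x) (b x) : ℕ) : ℝ) := by
      rw [Finset.mul_sum]
      apply Finset.sum_le_sum
      intro x _
      calc μ x * ((a x * b x : ℕ) : ℝ)
          ≤ μ x * ((k : ℝ) * ((min (a x) (b x) : ℕ) : ℝ)) :=
            mul_le_mul_of_nonneg_left (hmin x) (hμ0 x)
        _ = (k : ℝ) * (μ x * ((min (a x) (b x) : ℕ) : ℝ)) := by ring
    -- combine
    have hcomb : δ * ((k : ℝ) * ((k : ℝ) - 1))
        ≤ 2 * ((k : ℝ) * ∑ x : α, μ x * ((min (a x) (b x) : ℕ) : ℝ)) := by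
      calc δ * ((k : ℝ) * ((k : ℝ) - 1))
          ≤ 2 * ∑ p ∈ c ×ˢ c, ∑ x ∈ p.1 \ p.2, μ x := hpair
        _ = 2 * ∑ x : α, μ x * ((a x * b x : ℕ) : ℝ) := by rw [hsum_ab]
        _ ≤ 2 * ((k : ℝ) * ∑ x : α, μ x * ((min (a x) (b x) : ℕ) : ℝ)) := by
            linarith [hsum_min]
    have hkpos : (0 : ℝ) < (k : ℝ) := by exact_mod_cast hk1
    have hfin : δ * ((k : ℝ) - 1) ≤ 2 * ∑ x : α, μ x * ((min (a x) (b x) : ℕ) : ℝ) := by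
      nlinarith [hcomb, hkpos]
    calc δ * ((k : ℝ) - 1) ≤ 2 * ∑ x : α, μ x * ((min (a x) (b x) : ℕ) : ℝ) := hfin
      _ = 2 * ∑ x : α, μ x *
          (min ((Fam.filter fun S => S ∩ Y = A ∧ x ∈ S).card)
            ((Fam.filter fun S => S ∩ Y = A ∧ x ∉ S).card) : ℝ) := by
        congr 1
        apply Finset.sum_congr rfl
        intro x _
        rw [hfe1 x, hfe0 x]
        push_cast
        rfl
  -- sum over classes
  have hn : (Fam.card : ℝ) = ∑ A ∈ Q, ((Fam.filter fun S => S ∩ Y = A).card : ℝ) := by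
    rw [hQdef]
    exact_mod_cast congrArg Nat.cast (Finset.card_eq_sum_card_image (fun S => S ∩ Y) Fam)
  have hV : ((Q.card : ℕ) : ℝ) = ∑ A ∈ Q, (1 : ℝ) := by simp
  calc δ * ((Fam.card : ℝ) - (Q.card : ℝ))
      = δ * ∑ A ∈ Q, (((Fam.filter fun S => S ∩ Y = A).card : ℝ) - 1) := by
        congr 1
        rw [Finset.sum_sub_distrib, ← hn, Finset.sum_const, nsmul_eq_mul, mul_one]
    _ = ∑ A ∈ Q, δ * (((Fam.filter fun S => S ∩ Y = A).card : ℝ) - 1) :=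
        Finset.mul_sum _ _ _
    _ ≤ ∑ A ∈ Q, 2 * ∑ x : α, μ x *
          (min ((Fam.filter fun S => S ∩ Y = A ∧ x ∈ S).card)
            ((Fam.filter fun S => S ∩ Y = A ∧ x ∉ S).card) : ℝ) :=
        Finset.sum_le_sum hperA
    _ = 2 * ∑ x : α, μ x * (Mm Fam Y x : ℝ) := by
        rw [← Finset.mul_sum, ← hRHS]

end WPL

open WPL in
theorem weighted_packing_lemma {α : Type*} [Fintype α] [DecidableEq α]
    (μ : α → ℝ) (hμ0 : ∀ x, 0 ≤ μ x) (hμ1 : ∑ x, μ x = 1)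
    (Fam : Finset (Finset α)) (d : ℕ) (hd : 1 ≤ d)
    (hVC : ∀ S : Finset α, (∀ T ⊆ S, ∃ R ∈ Fam, R ∩ S = T) → S.card ≤ d)
    (δ : ℝ) (hδ0 : 0 < δ) (hδ1 : δ < 1)
    (hsep : ∀ S ∈ Fam, ∀ R ∈ Fam, S ≠ R → δ ≤ ∑ x ∈ (S \ R) ∪ (R \ S), μ x) :
    (Fam.card : ℝ) ≤
      2 * ∑ u : Fin (Nat.ceil (8 * (d : ℝ) / δ) - 1) → α,
        (∏ i, μ (u i)) *
          ((Fam.image (fun S => S ∩ (Finset.univ.image u))).card : ℝ) := by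
  classical
  set s : ℕ := Nat.ceil (8 * (d : ℝ) / δ) - 1 with hsdef
  have hdpos : (0 : ℝ) < (d : ℝ) := by exact_mod_cast hd
  have hquot_pos : (0 : ℝ) < 8 * (d : ℝ) / δ := by positivity
  have hceil_pos : 1 ≤ Nat.ceil (8 * (d : ℝ) / δ) := Nat.one_le_ceil_iff.2 hquot_pos
  have hm_eq : s + 1 = Nat.ceil (8 * (d : ℝ) / δ) := by omega
  have hm_ge : 8 * (d : ℝ) / δ ≤ ((s + 1 : ℕ) : ℝ) := by
    rw [hm_eq]; exact_mod_cast Nat.le_ceil _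
  have hmpos : (0 : ℝ) < ((s + 1 : ℕ) : ℝ) := by positivity
  -- weights
  have hw0 : ∀ u : Fin s → α, 0 ≤ ∏ i, μ (u i) :=
    fun u => Finset.prod_nonneg (fun i _ => hμ0 _)
  have hw1 : ∑ u : Fin s → α, ∏ i, μ (u i) = 1 := by
    calc ∑ u : Fin s → α, ∏ i, μ (u i)
        = ∑ u ∈ Fintype.piFinset (fun _ : Fin s => (univ : Finset α)), ∏ i, μ (u i) := by
          rw [Fintype.piFinset_univ]
      _ = ∏ _i : Fin s, ∑ x, μ x := (Finset.prod_univ_sum _ _).symm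
      _ = 1 := by rw [hμ1]; simp
  have hwm0 : ∀ z : Fin (s + 1) → α, 0 ≤ ∏ j, μ (z j) :=
    fun z => Finset.prod_nonneg (fun j _ => hμ0 _)
  have hwm1 : ∑ z : Fin (s + 1) → α, ∏ j, μ (z j) = 1 := by
    calc ∑ z : Fin (s + 1) → α, ∏ j, μ (z j)
        = ∑ z ∈ Fintype.piFinset (fun _ : Fin (s + 1) => (univ : Finset α)), ∏ j, μ (z j) := by
          rw [Fintype.piFinset_univ]
      _ = ∏ _j : Fin (s + 1), ∑ x, μ x := (Finset.prod_univ_sum _ _).symm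
      _ = 1 := by rw [hμ1]; simp
  -- symmetrization
  set G : Fin (s + 1) → (Fin (s + 1) → α) → ℝ := fun i z =>
    (∏ j, μ (z j)) * (Mm Fam (((univ : Finset (Fin (s + 1))).erase i).image z) (z i) : ℝ)
    with hGdef
  have hsym : ∀ i : Fin (s + 1), ∑ z : Fin (s + 1) → α, G i z
      = ∑ z : Fin (s + 1) → α, G 0 z := by
    intro i
    set σ : Equiv.Perm (Fin (s + 1)) := Equiv.swap i 0 with hσdef
    have hσσ : ∀ j, σ (σ j) = j := fun j => Equiv.swap_apply_self i 0 j
    set e : (Fin (s + 1) → α) ≃ (Fin (s + 1) → α) :=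
      { toFun := fun z => z ∘ σ, invFun := fun z => z ∘ σ,
        left_inv := fun z => by funext j; simp [Function.comp, hσσ],
        right_inv := fun z => by funext j; simp [Function.comp, hσσ] } with hedef
    have hpoint : ∀ z : Fin (s + 1) → α, G 0 (e z) = G i z := by
      intro z
      have h1 : ∏ j, μ ((z ∘ σ) j) = ∏ j, μ (z j) :=
        Equiv.prod_comp σ (fun j => μ (z j))
      have h2 : (z ∘ σ) 0 = z i := by
        simp only [Function.comp]
        rw [hσdef, Equiv.swap_apply_right]
      have h3 : ((univ : Finset (Fin (s + 1))).erase 0).image (z ∘ σ)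
          = ((univ : Finset (Fin (s + 1))).erase i).image z := by
        have him : ((univ : Finset (Fin (s + 1))).erase 0).image σ
            = (univ : Finset (Fin (s + 1))).erase i := by
          rw [Finset.image_erase σ.injective]
          congr 1
          · ext j
            simp only [mem_image, mem_univ, true_and, iff_true]
            exact ⟨σ.symm j, σ.apply_symm_apply j⟩
          · rw [hσdef, Equiv.swap_apply_right]
        rw [← him, Finset.image_image]
      show (∏ j, μ ((z ∘ σ) j)) * (Mm Fam
          (((univ : Finset (Fin (s + 1))).erase 0).image (z ∘ σ)) ((z ∘ σ) 0) : ℝ) = G i z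
      rw [h1, h2, h3]
    calc ∑ z : Fin (s + 1) → α, G i z = ∑ z : Fin (s + 1) → α, G 0 (e z) :=
          (Finset.sum_congr rfl (fun z _ => (hpoint z).symm))
      _ = ∑ z : Fin (s + 1) → α, G 0 z := Equiv.sum_comp e (G 0)
  -- bound on the symmetrized sum
  have hbound : ((s + 1 : ℕ) : ℝ) * (∑ z : Fin (s + 1) → α, G 0 z)
      ≤ 2 * d * Fam.card := by
    have h1 : ∑ i : Fin (s + 1), ∑ z : Fin (s + 1) → α, G i z
        = ((s + 1 : ℕ) : ℝ) * (∑ z : Fin (s + 1) → α, G 0 z) := by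
      rw [Finset.sum_congr rfl (fun i _ => hsym i), Finset.sum_const]
      simp [nsmul_eq_mul]
    rw [← h1, Finset.sum_comm]
    have h2 : ∀ z : Fin (s + 1) → α, ∑ i : Fin (s + 1), G i z
        ≤ (∏ j, μ (z j)) * (2 * d * Fam.card) := by
      intro z
      rw [hGdef, ← Finset.mul_sum]
      apply mul_le_mul_of_nonneg_left _ (hwm0 z)
      have hL2 := L2 hVC (s + 1) z
      calc ∑ i : Fin (s + 1),
            (Mm Fam (((univ : Finset (Fin (s + 1))).erase i).image z) (z i) : ℝ)
          = ((∑ i : Fin (s + 1),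
              Mm Fam (((univ : Finset (Fin (s + 1))).erase i).image z) (z i) : ℕ) : ℝ) := by
            push_cast; rfl
        _ ≤ ((2 * d * Fam.card : ℕ) : ℝ) := Nat.cast_le.2 hL2
        _ = 2 * d * Fam.card := by push_cast; rfl
    calc ∑ z : Fin (s + 1) → α, ∑ i : Fin (s + 1), G i z
        ≤ ∑ z : Fin (s + 1) → α, (∏ j, μ (z j)) * (2 * d * Fam.card) :=
          Finset.sum_le_sum (fun z _ => h2 z)
      _ = (∑ z : Fin (s + 1) → α, ∏ j, μ (z j)) * (2 * d * Fam.card) := by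
          rw [← Finset.sum_mul]
      _ = 2 * d * Fam.card := by rw [hwm1, one_mul]
  -- split off the first coordinate
  have hE0 : ∑ z : Fin (s + 1) → α, G 0 z
      = ∑ u : Fin s → α, (∏ i, μ (u i)) *
          ∑ x : α, μ x * (Mm Fam ((univ : Finset (Fin s)).image u) x : ℝ) := by
    have hcomp : ∑ p : α × (Fin s → α), G 0 (Fin.cons p.1 p.2)
        = ∑ z : Fin (s + 1) → α, G 0 z :=
      Equiv.sum_comp (Fin.consEquiv (fun _ : Fin (s + 1) => α)) (G 0)
    rw [← hcomp]
    have hpoint : ∀ (x : α) (u : Fin s → α), G 0 (Fin.cons x u)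
        = (μ x * ∏ i, μ (u i)) * (Mm Fam ((univ : Finset (Fin s)).image u) x : ℝ) := by
      intro x u
      have h1 : ∏ j : Fin (s + 1), μ ((Fin.cons x u : Fin (s + 1) → α) j)
          = μ x * ∏ i, μ (u i) := by
        rw [Fin.prod_univ_succ]
        simp [Fin.cons_zero, Fin.cons_succ]
      have h2 : ((univ : Finset (Fin (s + 1))).erase 0).image
            (Fin.cons x u : Fin (s + 1) → α)
          = (univ : Finset (Fin s)).image u := by
        ext y
        simp only [mem_image, mem_erase, mem_univ, true_and, and_true]
        constructor
        · rintro ⟨j, hj0, rfl⟩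
          obtain ⟨i, rfl⟩ := Fin.eq_succ_of_ne_zero hj0
          exact ⟨i, by simp⟩
        · rintro ⟨i, rfl⟩
          exact ⟨i.succ, Fin.succ_ne_zero i, by simp⟩
      have h3 : (Fin.cons x u : Fin (s + 1) → α) 0 = x := by simp
      show (∏ j, μ ((Fin.cons x u : Fin (s + 1) → α) j)) * (Mm Fam
          (((univ : Finset (Fin (s + 1))).erase 0).image (Fin.cons x u : Fin (s + 1) → α))
          ((Fin.cons x u : Fin (s + 1) → α) 0) : ℝ) = _
      rw [h1, h2, h3]
    calc ∑ p : α × (Fin s → α), G 0 (Fin.cons p.1 p.2)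
        = ∑ x : α, ∑ u : Fin s → α,
            (μ x * ∏ i, μ (u i)) * (Mm Fam ((univ : Finset (Fin s)).image u) x : ℝ) := by
          rw [Fintype.sum_prod_type]
          exact Finset.sum_congr rfl (fun x _ => Finset.sum_congr rfl
            (fun u _ => hpoint x u))
      _ = ∑ u : Fin s → α, ∑ x : α,
            (μ x * ∏ i, μ (u i)) * (Mm Fam ((univ : Finset (Fin s)).image u) x : ℝ) :=
          Finset.sum_comm
      _ = ∑ u : Fin s → α, (∏ i, μ (u i)) *
            ∑ x : α, μ x * (Mm Fam ((univ : Finset (Fin s)).image u) x : ℝ) := by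
          apply Finset.sum_congr rfl
          intro u _
          rw [Finset.mul_sum]
          apply Finset.sum_congr rfl
          intro x _
          ring
  -- Step A summed over u
  set EV : ℝ := ∑ u : Fin s → α,
      (∏ i, μ (u i)) *
        ((Fam.image (fun S => S ∩ ((univ : Finset (Fin s)).image u))).card : ℝ) with hEVdef
  have hL : ∑ u : Fin s → α, (∏ i, μ (u i)) * (δ * ((Fam.card : ℝ)
      - ((Fam.image (fun S => S ∩ ((univ : Finset (Fin s)).image u))).card : ℝ)))
      = δ * ((Fam.card : ℝ) - EV) := by
    have h1 : ∀ u : Fin s → α, (∏ i, μ (u i)) * (δ * ((Fam.card : ℝ)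
        - ((Fam.image (fun S => S ∩ ((univ : Finset (Fin s)).image u))).card : ℝ)))
        = δ * ((∏ i, μ (u i)) * (Fam.card : ℝ)) - δ * ((∏ i, μ (u i)) *
          ((Fam.image (fun S => S ∩ ((univ : Finset (Fin s)).image u))).card : ℝ)) :=
      fun u => by ring
    calc ∑ u : Fin s → α, (∏ i, μ (u i)) * (δ * ((Fam.card : ℝ)
          - ((Fam.image (fun S => S ∩ ((univ : Finset (Fin s)).image u))).card : ℝ)))
        = ∑ u : Fin s → α, (δ * ((∏ i, μ (u i)) * (Fam.card : ℝ))
            - δ * ((∏ i, μ (u i)) *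
              ((Fam.image (fun S => S ∩ ((univ : Finset (Fin s)).image u))).card : ℝ))) :=
          Finset.sum_congr rfl (fun u _ => h1 u)
      _ = (∑ u : Fin s → α, δ * ((∏ i, μ (u i)) * (Fam.card : ℝ)))
          - ∑ u : Fin s → α, δ * ((∏ i, μ (u i)) *
            ((Fam.image (fun S => S ∩ ((univ : Finset (Fin s)).image u))).card : ℝ)) :=
          Finset.sum_sub_distrib _ _
      _ = δ * ((∑ u : Fin s → α, ∏ i, μ (u i)) * (Fam.card : ℝ)) - δ * EV := by
          rw [← Finset.mul_sum, ← Finset.mul_sum, ← Finset.sum_mul, hEVdef]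
      _ = δ * ((Fam.card : ℝ) - EV) := by rw [hw1, one_mul]; ring
  have hR : ∑ u : Fin s → α, (∏ i, μ (u i)) * (2 * ∑ x : α, μ x *
      (Mm Fam ((univ : Finset (Fin s)).image u) x : ℝ))
      = 2 * ∑ z : Fin (s + 1) → α, G 0 z := by
    rw [hE0, Finset.mul_sum]
    exact Finset.sum_congr rfl (fun u _ => by ring)
  have hstep : δ * ((Fam.card : ℝ) - EV) ≤ 2 * ∑ z : Fin (s + 1) → α, G 0 z := by
    rw [← hL, ← hR]
    exact Finset.sum_le_sum
      (fun u _ => mul_le_mul_of_nonneg_left (stepA hμ0 hsep _) (hw0 u))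
  -- final arithmetic
  have hE0nn : 0 ≤ ∑ z : Fin (s + 1) → α, G 0 z :=
    Finset.sum_nonneg (fun z _ => mul_nonneg (hwm0 z) (Nat.cast_nonneg _))
  have h8 : 8 * (d : ℝ) ≤ δ * ((s + 1 : ℕ) : ℝ) := by
    rw [div_le_iff₀ hδ0] at hm_ge
    linarith [hm_ge]
  have hnn : (0 : ℝ) ≤ Fam.card := Nat.cast_nonneg _
  have hkey : ∑ z : Fin (s + 1) → α, G 0 z ≤ δ * (Fam.card : ℝ) / 4 := by
    have h2 : (8 * (d : ℝ)) * (∑ z : Fin (s + 1) → α, G 0 z)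
        ≤ (δ * ((s + 1 : ℕ) : ℝ)) * (∑ z : Fin (s + 1) → α, G 0 z) :=
      mul_le_mul_of_nonneg_right h8 hE0nn
    have h3 : (8 * (d : ℝ)) * (∑ z : Fin (s + 1) → α, G 0 z)
        ≤ δ * (2 * d * Fam.card) := by nlinarith [hbound, hδ0.le]
    have h4 : (d : ℝ) * (8 * (∑ z : Fin (s + 1) → α, G 0 z))
        ≤ (d : ℝ) * (2 * δ * Fam.card) := by nlinarith
    have h5 : 8 * (∑ z : Fin (s + 1) → α, G 0 z) ≤ 2 * δ * Fam.card :=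
      le_of_mul_le_mul_left h4 hdpos
    linarith
  have hfin : δ * ((Fam.card : ℝ) - EV) ≤ δ * ((Fam.card : ℝ) / 2) := by
    calc δ * ((Fam.card : ℝ) - EV) ≤ 2 * ∑ z : Fin (s + 1) → α, G 0 z := hstep
      _ ≤ δ * ((Fam.card : ℝ) / 2) := by linarith
  have hhalf : (Fam.card : ℝ) - EV ≤ (Fam.card : ℝ) / 2 :=
    le_of_mul_le_mul_left hfin hδ0
  linarith
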